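/- Let the optimization problem be min over H with columns in the probability simplex Δ^r of t(H) = (α̃/4)‖H‖_F⁴ + (σ̃/2)‖H‖_F² - ⟨Q,H⟩, with α̃, σ̃ > 0. Then any minimizer H* satisfies H* = (1/(α̃‖H*‖_F² + σ̃))·[Q - eνᵀ]₊ for some ν ∈ ℝⁿ, where [·]₊ denotes the entrywise positive part and e is the all-ones vector in ℝ^r. -/

import Mathlib

open Matrix BigOperators

theorem stmt19 {r n : ℕ} (α σ : ℝ) (hα : 0 < α) (hσ : 0 < σ)
    (Q : Matrix (Fin r) (Fin n) ℝ)
    (t : Matrix (Fin r) (Fin n) ℝ → ℝ)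
    (ht : ∀ H : Matrix (Fin r) (Fin n) ℝ,
      t H = (α / 4) * (∑ i, ∑ j, (H i j) ^ 2) ^ 2 + (σ / 2) * (∑ i, ∑ j, (H i j) ^ 2)
        - ∑ i, ∑ j, Q i j * H i j)
    (Hstar : Matrix (Fin r) (Fin n) ℝ)
    (hfeas : ∀ j, (∀ i, 0 ≤ Hstar i j) ∧ ∑ i, Hstar i j = 1)
    (hmin : ∀ H : Matrix (Fin r) (Fin n) ℝ,
      (∀ j, (∀ i, 0 ≤ H i j) ∧ ∑ i, H i j = 1) → t Hstar ≤ t H) :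
    ∃ ν : Fin n → ℝ, ∀ i j,
      Hstar i j = (1 / (α * (∑ i', ∑ j', (Hstar i' j') ^ 2) + σ)) * max (Q i j - ν j) 0 := by
  classical
  rcases Nat.eq_zero_or_pos r with hr | hr
  · subst hr
    exact ⟨fun _ => 0, fun i => i.elim0⟩
  haveI : Nonempty (Fin r) := ⟨⟨0, hr⟩⟩
  set N : ℝ := ∑ i, ∑ j, (Hstar i j) ^ 2 with hN
  set L : ℝ := ∑ i, ∑ j, Q i j * Hstar i j with hL
  set c : ℝ := α * N + σ with hc
  have hN0 : 0 ≤ N := by positivity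
  have hcpos : 0 < c := by positivity
  -- key first-order optimality inequality
  have key : ∀ (j : Fin n) (i i' : Fin r), 0 < Hstar i j →
      c * Hstar i j - Q i j ≤ c * Hstar i' j - Q i' j := by
    intro j i i' hpos
    by_cases hii : i' = i
    · simp [hii]
    set d : ℝ := Hstar i' j - Hstar i j with hd
    set q : ℝ := Q i' j - Q i j with hq
    have hii' : ¬ i = i' := fun h => hii h.symm
    set D : Matrix (Fin r) (Fin n) ℝ :=
      fun a b => ((if a = i' then (1:ℝ) else 0) - (if a = i then 1 else 0)) *
        (if b = j then 1 else 0) with hD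
    have hD1 : ∑ a, ∑ b, Hstar a b * D a b = d := by
      simp [hD, mul_sub, sub_mul, mul_ite, Finset.sum_sub_distrib,
        Finset.sum_ite_eq', hd]
    have hD2 : ∑ a, ∑ b, (D a b) ^ 2 = 2 := by
      have hsq : ∀ a b, (D a b) ^ 2 =
          (if a = i' then (1:ℝ) else 0) * (if b = j then 1 else 0)
            + (if a = i then (1:ℝ) else 0) * (if b = j then 1 else 0) := by
        intro a b
        by_cases h1 : a = i'
        · by_cases h2 : a = i
          · exact absurd (h1.symm.trans h2) hii
          · by_cases h3 : b = j <;> simp [hD, h1, h2, h3, hii, hii']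
        · by_cases h2 : a = i
          · by_cases h3 : b = j <;> simp [hD, h1, h2, h3, hii, hii']
          · by_cases h3 : b = j <;> simp [hD, h1, h2, h3, hii, hii']
      simp only [hsq, Finset.sum_add_distrib]
      simp [mul_ite, mul_one, mul_zero, Finset.sum_ite_eq']
      norm_num
    have hQD : ∑ a, ∑ b, Q a b * D a b = q := by
      simp [hD, mul_sub, sub_mul, mul_ite, Finset.sum_sub_distrib,
        Finset.sum_ite_eq', hq]
    have hstep : ∀ s : ℝ, 0 < s → s ≤ Hstar i j →
        0 ≤ α * s * (d + s) ^ 2 + c * (d + s) - q := by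
      intro s hs hsle
      set Hs : Matrix (Fin r) (Fin n) ℝ := fun a b => Hstar a b + s * D a b with hHs
      have hfeasS : ∀ b, (∀ a, 0 ≤ Hs a b) ∧ ∑ a, Hs a b = 1 := by
        intro b
        constructor
        · intro a
          by_cases h3 : b = j
          · by_cases h1 : a = i'
            · have h4 := (hfeas j).1 i'
              subst h1
              simp [hHs, hD, h3, hii]
              linarith
            · by_cases h2 : a = i
              · have h4 := (hfeas j).1 i
                subst h2
                simp [hHs, hD, h1, h3]
                linarith
              · simpa [hHs, hD, h1, h2, h3] using (hfeas j).1 a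
          · simpa [hHs, hD, h3] using (hfeas b).1 a
        · by_cases h3 : b = j
          · simpa [hHs, hD, h3, Finset.sum_add_distrib, Finset.mul_sum, mul_sub,
              Finset.sum_sub_distrib, Finset.sum_ite_eq'] using (hfeas j).2
          · simpa [hHs, hD, h3] using (hfeas b).2
      have hS2 : ∑ a, ∑ b, (Hs a b) ^ 2 = N + 2 * s * d + s ^ 2 * 2 := by
        have hexp : ∀ a b, (Hs a b) ^ 2 =
            (Hstar a b) ^ 2 + 2 * s * (Hstar a b * D a b) + s ^ 2 * (D a b) ^ 2 := by
          intro a b; simp only [hHs]; ring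
        calc ∑ a, ∑ b, (Hs a b) ^ 2
            = ∑ a, ∑ b, ((Hstar a b) ^ 2 + 2 * s * (Hstar a b * D a b)
                + s ^ 2 * (D a b) ^ 2) := by
              exact Finset.sum_congr rfl fun a _ => Finset.sum_congr rfl fun b _ => hexp a b
          _ = N + 2 * s * d + s ^ 2 * 2 := by
              simp only [Finset.sum_add_distrib, ← Finset.mul_sum]
              rw [← hN, hD1, hD2]
      have hSL : ∑ a, ∑ b, Q a b * Hs a b = L + s * q := by
        have : ∀ a b, Q a b * Hs a b = Q a b * Hstar a b + s * (Q a b * D a b) := by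
          intro a b; simp only [hHs]; ring
        calc ∑ a, ∑ b, Q a b * Hs a b
            = ∑ a, ∑ b, (Q a b * Hstar a b + s * (Q a b * D a b)) := by
              exact Finset.sum_congr rfl fun a _ => Finset.sum_congr rfl fun b _ => this a b
          _ = L + s * q := by
              simp only [Finset.sum_add_distrib, ← Finset.mul_sum]
              rw [← hL, hQD]
      have hle := hmin Hs hfeasS
      rw [ht Hstar, ht Hs, hS2, hSL, ← hN, ← hL] at hle
      have hid : ((α / 4) * (N + 2 * s * d + s ^ 2 * 2) ^ 2
            + (σ / 2) * (N + 2 * s * d + s ^ 2 * 2) - (L + s * q))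
          - ((α / 4) * N ^ 2 + (σ / 2) * N - L)
          = s * (α * s * (d + s) ^ 2 + c * (d + s) - q) := by
        rw [hc]; ring
      have h0 : 0 ≤ s * (α * s * (d + s) ^ 2 + c * (d + s) - q) := by
        rw [← hid]; linarith
      by_contra hneg
      push_neg at hneg
      have := mul_neg_of_pos_of_neg hs hneg
      linarith
    -- take the limit s → 0⁺
    have hlim : 0 ≤ c * d - q := by
      have hcont : Continuous (fun s : ℝ => α * s * (d + s) ^ 2 + c * (d + s) - q) := by
        fun_prop
      have htend : Filter.Tendsto (fun s : ℝ => α * s * (d + s) ^ 2 + c * (d + s) - q)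
          (nhdsWithin 0 (Set.Ioi 0)) (nhds (c * d - q)) := by
        refine Filter.Tendsto.mono_left ?_ nhdsWithin_le_nhds
        simpa using hcont.tendsto 0
      have hev : ∀ᶠ s in nhdsWithin (0:ℝ) (Set.Ioi 0),
          0 ≤ α * s * (d + s) ^ 2 + c * (d + s) - q := by
        filter_upwards [Ioc_mem_nhdsGT_of_mem (Set.left_mem_Ico.2 hpos)] with s hs
        exact hstep s hs.1 hs.2
      exact ge_of_tendsto htend hev
    rw [hd, hq] at hlim
    linarith
  -- define the multipliers
  refine ⟨fun j => Finset.univ.sup' Finset.univ_nonempty (fun i => Q i j - c * Hstar i j),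
    fun i j => ?_⟩
  rcases eq_or_lt_of_le ((hfeas j).1 i) with h0 | hpos
  · -- H* i j = 0
    have hle : Q i j ≤ Finset.univ.sup' Finset.univ_nonempty (fun a => Q a j - c * Hstar a j) := by
      have := Finset.le_sup' (fun a => Q a j - c * Hstar a j) (Finset.mem_univ i)
      rw [← h0] at this
      simpa only [mul_zero, sub_zero] using this
    rw [← h0]
    rw [max_eq_right (by linarith)]
    ring
  · -- H* i j > 0
    have hsup : Finset.univ.sup' Finset.univ_nonempty (fun a => Q a j - c * Hstar a j)
        = Q i j - c * Hstar i j := by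
      apply le_antisymm
      · apply Finset.sup'_le
        intro a _
        have := key j i a hpos
        linarith
      · exact Finset.le_sup' (fun a => Q a j - c * Hstar a j) (Finset.mem_univ i)
    simp only [hsup]
    have heq : Q i j - (Q i j - c * Hstar i j) = c * Hstar i j := by ring
    rw [heq, max_eq_left (mul_nonneg hcpos.le hpos.le)]
    field_simp
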